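/- The expected total delay D of an IoT mobile device is convex in its own offloading vector: ConvexOn ℝ S₀ D holds. -/

import Mathlib

open Finset

noncomputable section

/-- Total offloading fraction `s(α) = Σ_j α_j`. -/
def sTot {N : ℕ} (α : Fin N → ℝ) : ℝ := ∑ j, α j

/-- Local computing delay contribution. -/
def Gfun {N : ℕ} (lam c f : ℝ) (α : Fin N → ℝ) : ℝ :=
  (1 - sTot α) * c / (f - (1 - sTot α) * lam * c)

/-- Wireless transmission delay contribution. -/
def Hfun {N : ℕ} (lam z r Sbar : ℝ) (α : Fin N → ℝ) : ℝ :=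
  sTot α * (lam * Sbar * sTot α / (2 * (1 - lam * z * sTot α / r)) + z / r)

/-- Expected total delay. -/
def Dfun {N : ℕ} (Nc : ℕ) (lam c z r f Sbar : ℝ) (fOSP w K : Fin N → ℝ)
    (α : Fin N → ℝ) : ℝ :=
  Gfun lam c f α + Hfun lam z r Sbar α + (∑ j, α j * w j) +
    (∑ j ∈ Finset.univ.filter (fun j : Fin N => (j : ℕ) < Nc), α j * c / fOSP j) +
    (∑ j ∈ Finset.univ.filter (fun j : Fin N => Nc ≤ (j : ℕ)),
      α j * c / (fOSP j - K j - α j * lam * c))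

/-- Expected energy consumption. -/
def Efun {N : ℕ} (lam c z r f Sbar εloc εtx : ℝ) (α : Fin N → ℝ) : ℝ :=
  εloc * Gfun lam c f α + εtx * Hfun lam z r Sbar α

/-- Expected payment. -/
def Pfun {N : ℕ} (lam c : ℝ) (price : Fin N → ℝ) (α : Fin N → ℝ) : ℝ :=
  ∑ j, α j * price j * c * lam

/-- Basic feasible set `S₀`. -/
def S0 {N : ℕ} (Nc : ℕ) (lam c z r f : ℝ) (fOSP K : Fin N → ℝ) :
    Set (Fin N → ℝ) :=
  {α | (∀ j, 0 ≤ α j) ∧ sTot α ≤ 1 ∧ (1 - sTot α) * lam * c < f ∧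
    lam * z * sTot α < r ∧ ∀ j : Fin N, Nc ≤ (j : ℕ) → K j + α j * lam * c < fOSP j}


open Finset

section helpers

lemma convexOn_inv_Ioi : ConvexOn ℝ (Set.Ioi (0:ℝ)) (fun x : ℝ => x⁻¹) := by
  have h := (strictConvexOn_zpow (m := -1) (by decide) (by decide)).convexOn
  exact h.congr (fun x _ => by simp [zpow_neg_one])

lemma convexOn_comp_affine' {E : Type*} [AddCommGroup E] [Module ℝ E]
    {φ : ℝ → ℝ} {t : Set ℝ} (hφ : ConvexOn ℝ t φ)
    {s : Set E} (hs : Convex ℝ s) (L : E → ℝ) (g : E → ℝ)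
    (hL : ∀ (a b : ℝ), a + b = 1 → ∀ x y : E, L (a • x + b • y) = a * L x + b * L y)
    (hmem : ∀ x ∈ s, L x ∈ t) (hg : ∀ x ∈ s, g x = φ (L x)) :
    ConvexOn ℝ s g := by
  refine ⟨hs, fun x hx y hy a b ha hb hab => ?_⟩
  rw [hg _ (hs hx hy ha hb hab), hg _ hx, hg _ hy]
  simp only [smul_eq_mul]
  rw [hL a b hab x y]
  exact hφ.2 (hmem x hx) (hmem y hy) ha hb hab

lemma convexOn_affine_Iio (b B C : ℝ) :
    ConvexOn ℝ (Set.Iio b) (fun x : ℝ => B * x + C) := by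
  refine ⟨convex_Iio b, fun x _ y _ a a' ha ha' hab => le_of_eq ?_⟩
  simp only [smul_eq_mul]
  linear_combination (-C) * hab

lemma convexOn_master (b : ℝ) (A B C : ℝ) (hA : 0 ≤ A) :
    ConvexOn ℝ (Set.Iio b) (fun x : ℝ => A * (b - x)⁻¹ + B * x + C) := by
  have h1 : ConvexOn ℝ (Set.Iio b) (fun x : ℝ => (b - x)⁻¹) := by
    refine convexOn_comp_affine' convexOn_inv_Ioi (convex_Iio b) (fun x => b - x) _
      (fun a a' hab x y => ?_) (fun x hx => ?_) (fun x _ => rfl)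
    · simp only [smul_eq_mul]; linear_combination (-b) * hab
    · exact Set.mem_Ioi.mpr (sub_pos.mpr hx)
  have h2 := (h1.smul hA).add (convexOn_affine_Iio b B C)
  exact h2.congr (fun x _ => by simp only [Pi.add_apply, smul_eq_mul]; ring)

lemma convexOn_finset_sum' {E : Type*} [AddCommGroup E] [Module ℝ E]
    {s : Set E} {ι : Type*} (t : Finset ι) (f : ι → E → ℝ) (hs : Convex ℝ s)
    (h : ∀ i ∈ t, ConvexOn ℝ s (f i)) :
    ConvexOn ℝ s (fun x => ∑ i ∈ t, f i x) := by
  induction t using Finset.cons_induction with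
  | empty => simpa using convexOn_const (0:ℝ) hs
  | cons i t hi ih =>
    simp only [Finset.sum_cons]
    exact (h i (Finset.mem_cons_self i t)).add
      (ih fun j hj => h j (Finset.mem_cons_of_mem hj))

lemma convex_comb_lt (A B F a b : ℝ) (hA : A < F) (hB : B < F)
    (ha : 0 ≤ a) (hb : 0 ≤ b) (hab : a + b = 1) : a * A + b * B < F := by
  rcases ha.eq_or_lt with h | h
  · obtain rfl : a = 0 := h.symm
    obtain rfl : b = 1 := by linarith
    simpa using hB
  · have h1 : b * B ≤ b * F := mul_le_mul_of_nonneg_left hB.le hb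
    have h2 : a * A < a * F := mul_lt_mul_of_pos_left hA h
    have h3 : a * F + b * F = F := by linear_combination F * hab
    linarith

end helpers


/-- The expected total delay `D` is convex on the basic feasible set `S₀`. -/
theorem delay_convexOn (N Nc : ℕ) (hN : 1 ≤ N) (hNc : Nc ≤ N)
    (lam c z r f Sbar : ℝ) (hlam : 0 < lam) (hc : 0 < c) (hz : 0 < z) (hr : 0 < r)
    (hf : 0 < f) (hSbar : 0 < Sbar)
    (fOSP w K : Fin N → ℝ)
    (hfOSP : ∀ j, 0 < fOSP j) (hw : ∀ j, 0 ≤ w j)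
    (hK : ∀ j : Fin N, Nc ≤ (j : ℕ) → 0 ≤ K j ∧ K j < fOSP j) :
    ConvexOn ℝ (S0 Nc lam c z r f fOSP K)
      (Dfun Nc lam c z r f Sbar fOSP w K) := by
  have hlam' : lam ≠ 0 := ne_of_gt hlam
  have hr' : r ≠ 0 := ne_of_gt hr
  have hz' : z ≠ 0 := ne_of_gt hz
  have hsT : ∀ (a b : ℝ) (x y : Fin N → ℝ),
      sTot (a • x + b • y) = a * sTot x + b * sTot y := by
    intro a b x y
    simp [sTot, Pi.add_apply, Pi.smul_apply, smul_eq_mul, Finset.sum_add_distrib,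
      Finset.mul_sum]
  -- convexity of S0
  have hS : Convex ℝ (S0 Nc lam c z r f fOSP K) := by
    intro x hx y hy a b ha hb hab
    obtain ⟨hx1, hx2, hx3, hx4, hx5⟩ := hx
    obtain ⟨hy1, hy2, hy3, hy4, hy5⟩ := hy
    have hst := hsT a b x y
    refine ⟨fun j => ?_, ?_, ?_, ?_, fun j hj => ?_⟩
    · simp only [Pi.add_apply, Pi.smul_apply, smul_eq_mul]
      exact add_nonneg (mul_nonneg ha (hx1 j)) (mul_nonneg hb (hy1 j))
    · rw [hst]
      nlinarith [mul_le_mul_of_nonneg_left hx2 ha, mul_le_mul_of_nonneg_left hy2 hb]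
    · have e : (1 - sTot (a • x + b • y)) * lam * c
          = a * ((1 - sTot x) * lam * c) + b * ((1 - sTot y) * lam * c) := by
        rw [hst]; linear_combination (-(lam * c)) * hab
      rw [e]
      exact convex_comb_lt _ _ _ _ _ hx3 hy3 ha hb hab
    · have e : lam * z * sTot (a • x + b • y)
          = a * (lam * z * sTot x) + b * (lam * z * sTot y) := by
        rw [hst]; ring
      rw [e]
      exact convex_comb_lt _ _ _ _ _ hx4 hy4 ha hb hab
    · have e : K j + (a • x + b • y) j * lam * c
          = a * (K j + x j * lam * c) + b * (K j + y j * lam * c) := by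
        simp only [Pi.add_apply, Pi.smul_apply, smul_eq_mul]
        linear_combination (-(K j)) * hab
      rw [e]
      exact convex_comb_lt _ _ _ _ _ (hx5 j hj) (hy5 j hj) ha hb hab
  -- G piece
  have hG : ConvexOn ℝ (S0 Nc lam c z r f fOSP K) (fun α => Gfun lam c f α) := by
    refine convexOn_comp_affine' (convexOn_master f (f / lam) 0 (-(1 / lam))
      (by positivity)) hS (fun α => (1 - sTot α) * lam * c) _
      (fun a b hab x y => ?_) (fun α hα => ?_) (fun α hα => ?_)
    · show (1 - sTot (a • x + b • y)) * lam * c = _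
      rw [hsT]; linear_combination (-(lam * c)) * hab
    · exact Set.mem_Iio.mpr hα.2.2.1
    · obtain ⟨h1, h2, h3, h4, h5⟩ := hα
      have hd : f - (1 - sTot α) * lam * c ≠ 0 := ne_of_gt (by linarith)
      rw [Gfun]
      field_simp
      linear_combination (-1 : ℝ) * mul_inv_cancel₀ hd
  -- H piece
  have hH : ConvexOn ℝ (S0 Nc lam c z r f fOSP K) (fun α => Hfun lam z r Sbar α) := by
    set A : ℝ := Sbar * r ^ 2 / (2 * lam * z ^ 2) with hA
    refine convexOn_comp_affine' (convexOn_master 1 A (1 / lam - A) (-A)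
      (by rw [hA]; positivity)) hS (fun α => lam * z * sTot α / r) _
      (fun a b hab x y => ?_) (fun α hα => ?_) (fun α hα => ?_)
    · show lam * z * sTot (a • x + b • y) / r = _
      rw [hsT]; ring
    · exact Set.mem_Iio.mpr ((div_lt_one hr).mpr hα.2.2.2.1)
    · obtain ⟨h1, h2, h3, h4, h5⟩ := hα
      have h1' : (0:ℝ) < r - lam * z * sTot α := by linarith
      have h2' : (1 - lam * z * sTot α / r) = (r - lam * z * sTot α) / r := by
        field_simp
      have h3' : r - lam * z * sTot α ≠ 0 := ne_of_gt h1'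
      rw [Hfun, hA]
      show _ = _ * (1 - lam * z * sTot α / r)⁻¹ + _ * (lam * z * sTot α / r) + _
      rw [h2']
      field_simp
      linear_combination (-(r + sTot α * lam * z) * Sbar * r ^ 2) * mul_inv_cancel₀ h3'
  -- weight sum (linear)
  have hW : ConvexOn ℝ (S0 Nc lam c z r f fOSP K) (fun α => ∑ j, α j * w j) := by
    refine ⟨hS, fun x _ y _ a b ha hb hab => le_of_eq ?_⟩
    simp only [Pi.add_apply, Pi.smul_apply, smul_eq_mul, Finset.mul_sum,
      ← Finset.sum_add_distrib]
    exact Finset.sum_congr rfl fun j _ => by ring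
  -- cloud sum (linear)
  have hC : ConvexOn ℝ (S0 Nc lam c z r f fOSP K)
      (fun α => ∑ j ∈ Finset.univ.filter (fun j : Fin N => (j : ℕ) < Nc),
        α j * c / fOSP j) := by
    refine ⟨hS, fun x _ y _ a b ha hb hab => le_of_eq ?_⟩
    simp only [Pi.add_apply, Pi.smul_apply, smul_eq_mul, Finset.mul_sum,
      ← Finset.sum_add_distrib]
    exact Finset.sum_congr rfl fun j _ => by ring
  -- edge sum
  have hE : ConvexOn ℝ (S0 Nc lam c z r f fOSP K)
      (fun α => ∑ j ∈ Finset.univ.filter (fun j : Fin N => Nc ≤ (j : ℕ)),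
        α j * c / (fOSP j - K j - α j * lam * c)) := by
    refine convexOn_finset_sum' _ _ hS (fun j hj => ?_)
    have hj' : Nc ≤ (j : ℕ) := by simpa using hj
    have hb0 : 0 < fOSP j - K j := by
      have := hK j hj'
      linarith [this.2]
    refine convexOn_comp_affine' (convexOn_master (fOSP j - K j)
      ((fOSP j - K j) / lam) 0 (-(1 / lam)) (by positivity)) hS
      (fun α => α j * (lam * c)) _
      (fun a b hab x y => ?_) (fun α hα => ?_) (fun α hα => ?_)
    · simp only [Pi.add_apply, Pi.smul_apply, smul_eq_mul]; ring
    · have h5 := hα.2.2.2.2 j hj'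
      refine Set.mem_Iio.mpr ?_
      show α j * (lam * c) < fOSP j - K j
      nlinarith [h5]
    · have h5 := hα.2.2.2.2 j hj'
      have hd : fOSP j - K j - α j * lam * c ≠ 0 := ne_of_gt (by linarith)
      have hd' : fOSP j - K j - α j * (lam * c) ≠ 0 := by
        intro h; exact hd (by linarith [h])
      field_simp
      linear_combination (-1 : ℝ) * mul_inv_cancel₀ hd
  have hsum := (((hG.add hH).add hW).add hC).add hE
  exact hsum.congr (fun α _ => by simp only [Pi.add_apply, Dfun])

end
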